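/- Let n ≥ 1, let R be a commutative ring, and let a weighted matrix digraph on vertices {0,1,…,n} be given by a finite arc type E with source map s, target map t and weight map w as above. Let q̃_1,…,q̃_m and p_1,…,p_m be lists of distinct elements of {1,…,n}. Consider subsets B ⊆ E such that: B contains no arc whose target lies in {q̃_1,…,q̃_m}; every vertex i ∈ {1,…,n} \ {q̃_1,…,q̃_m} is the target of exactly one arc of B; and B contains no directed cycle even after adjoining, for each k, a formal root arc from 0 to q̃_k. Suppose B is such a subset and there exists an index j such that q̃_j ≠ p_j and there is no directed path within B from q̃_j to any vertex p_ℓ, ℓ ∈ {1,…,m}. Then the subset B' = B ∪ {e*}, for any arc e* with s(e*) = p_j and t(e*) = q̃_j, differs from B only in that the vertex q̃_j acquires the single in-arc e*, and replacing the weight-1 root arc to q̃_j by the weight-(−1) arc (p_j, q̃_j) changes the sign of the total weight; consequently, in the sum of signed weights over all spanning branchings of the digraph of the reduced matrix A^{P,Q̃} (where each vertex q̃_k receives a root arc of weight 1 and, if p_k ≠ q̃_k, an arc from p_k of weight −1), the contributions of all branchings containing a root q̃_j with no path to any p_ℓ cancel in pairs, so their total contribution is 0. -/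

import Mathlib

attribute [local instance] Classical.propDecidable

/-- A directed path within the arc set `S` from `u` to `v`: a nonempty list of arcs `e₁,…,e_r`
of `S` with `s e₁ = u`, `t eₖ = s eₖ₊₁` for `k < r`, and `t e_r = v`. -/
def HasPathIn {V E : Type*} (s t : E → V) (S : Finset E) (u v : V) : Prop :=
  ∃ (l : List E) (hl : l ≠ []), (∀ e ∈ l, e ∈ S) ∧
    List.Chain' (fun e f => t e = s f) l ∧ s (l.head hl) = u ∧ t (l.getLast hl) = v

/-- A directed cycle within the arc set `S`: a nonempty list of arcs `e₁,…,e_r` of `S` with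
`t eₖ = s eₖ₊₁` for `k < r` and `t e_r = s e₁`. -/
def HasCycleIn {V E : Type*} (s t : E → V) (S : Finset E) : Prop :=
  ∃ (l : List E) (hl : l ≠ []), (∀ e ∈ l, e ∈ S) ∧
    List.Chain' (fun e f => t e = s f) l ∧ t (l.getLast hl) = s (l.head hl)

/-- A spanning branching (arborescence) of the matrix digraph on vertices `{0,…,n}`: a set `S`
of `n` arcs such that every vertex `i ∈ {1,…,n}` is the target of exactly one arc of `S` and
`S` contains no directed cycle. -/
def IsArbor {E : Type*} (n : ℕ) (s t : E → Fin (n + 1)) (S : Finset E) : Prop :=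
  S.card = n ∧ (∀ i : Fin (n + 1), i ≠ 0 → ∃! e, e ∈ S ∧ t e = i) ∧ ¬ HasCycleIn s t S

/-- The arc type of the matrix digraph of the reduced matrix `A^{P,Q̃}`: the original arcs
whose target is not a `q̃ k`, together with, for each `k`, a root arc `(0, q̃ k)` of weight `1`
and, whenever `p k ≠ q̃ k`, an arc `(p k, q̃ k)` of weight `-1`. -/
abbrev ReducedArcs {E : Type*} {n m : ℕ} (t : E → Fin (n + 1)) (qt p : Fin m → Fin n) :=
  {e : E // ∀ k, t e ≠ (qt k).succ} ⊕ Fin m ⊕ {k : Fin m // p k ≠ qt k}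

/-- Source map of the reduced digraph. -/
def redSrc {E : Type*} {n m : ℕ} (s t : E → Fin (n + 1)) (qt p : Fin m → Fin n) :
    ReducedArcs t qt p → Fin (n + 1) :=
  Sum.elim (fun e => s e.1) (Sum.elim (fun _ => 0) (fun k => (p k.1).succ))

/-- Target map of the reduced digraph. -/
def redTgt {E : Type*} {n m : ℕ} (t : E → Fin (n + 1)) (qt p : Fin m → Fin n) :
    ReducedArcs t qt p → Fin (n + 1) :=
  Sum.elim (fun e => t e.1) (Sum.elim (fun k => (qt k).succ) (fun k => (qt k.1).succ))

/-- Weight map of the reduced digraph: original weights, weight `1` on the root arcs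
`(0, q̃ k)`, and weight `-1` on the arcs `(p k, q̃ k)`. -/
def redWt {E : Type*} {n m : ℕ} {R : Type*} [CommRing R]
    (t : E → Fin (n + 1)) (w : E → R) (qt p : Fin m → Fin n) :
    ReducedArcs t qt p → R :=
  Sum.elim (fun e => w e.1) (Sum.elim (fun _ => (1 : R)) (fun _ => (-1 : R)))


namespace SBB

variable {V E : Type*} (s t : E → V)

/-- One-step relation generated by arcs in `S`. -/
def Step (S : Finset E) (x y : V) : Prop := ∃ e ∈ S, s e = x ∧ t e = y

variable {s t}

lemma list_to_transGen {S : Finset E} :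
    ∀ (l : List E) (hl : l ≠ []), (∀ e ∈ l, e ∈ S) →
      List.Chain' (fun e f => t e = s f) l →
      Relation.TransGen (Step s t S) (s (l.head hl)) (t (l.getLast hl))
  | [], hl => by simp at hl
  | [e], _ => fun hmem _ => by
      exact Relation.TransGen.single ⟨e, hmem e (by simp), rfl, rfl⟩
  | e :: f :: rest, _ => fun hmem hchain => by
      have hch := List.isChain_cons_cons.mp hchain
      have ih := list_to_transGen (f :: rest) (by simp)
        (fun x hx => hmem x (List.mem_cons_of_mem _ hx)) hch.2
      have : Relation.TransGen (Step s t S) (t e) (t ((f :: rest).getLast (by simp))) := by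
        simpa [List.head, hch.1] using ih
      rw [show (e :: f :: rest).getLast (by simp) = (f :: rest).getLast (by simp) from
        List.getLast_cons (by simp)]
      exact this.head ⟨e, hmem e (by simp), rfl, rfl⟩

lemma hasPathIn_iff_transGen {S : Finset E} {u v : V} :
    HasPathIn s t S u v ↔ Relation.TransGen (Step s t S) u v := by
  constructor
  · rintro ⟨l, hl, hmem, hchain, hhead, hlast⟩
    have := list_to_transGen l hl hmem hchain
    rwa [hhead, hlast] at this
  · intro h
    induction h using Relation.TransGen.head_induction_on with
    | single h =>
        obtain ⟨e, he, h1, h2⟩ := h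
        exact ⟨[e], by simp, by simpa using he, by simp [List.Chain'], by simpa, by simpa⟩
    | head h' _ ihp =>
        obtain ⟨e, he, h1, h2⟩ := h'
        obtain ⟨l, hl, hmem, hchain, hhead, hlast⟩ := ihp
        refine ⟨e :: l, by simp, ?_, ?_, by simpa, ?_⟩
        · intro x hx
          rcases List.mem_cons.mp hx with rfl | hx
          · exact he
          · exact hmem x hx
        · refine List.isChain_cons.mpr ?_
          refine ⟨?_, hchain⟩
          intro y hy
          have : y = l.head hl := by
            rw [List.head?_eq_head hl] at hy
            exact (by simpa using hy : l.head hl = y).symm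
          rw [this, hhead, h2]
        · rw [show (e :: l).getLast (by simp) = l.getLast hl from List.getLast_cons hl]
          exact hlast

lemma hasCycleIn_iff_transGen {S : Finset E} :
    HasCycleIn s t S ↔ ∃ u, Relation.TransGen (Step s t S) u u := by
  constructor
  · rintro ⟨l, hl, hmem, hchain, hclose⟩
    exact ⟨s (l.head hl), hasPathIn_iff_transGen.mp ⟨l, hl, hmem, hchain, rfl, hclose⟩⟩
  · rintro ⟨u, h⟩
    obtain ⟨l, hl, hmem, hchain, hhead, hlast⟩ := hasPathIn_iff_transGen.mpr h
    exact ⟨l, hl, hmem, hchain, by rw [hhead, hlast]⟩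

lemma step_mono {S S' : Finset E} (h : S ⊆ S') {x y : V} :
    Step s t S x y → Step s t S' x y := fun ⟨e, he, h1, h2⟩ => ⟨e, h he, h1, h2⟩

lemma reach_mono {S S' : Finset E} (h : S ⊆ S') {x y : V} :
    Relation.TransGen (Step s t S) x y → Relation.TransGen (Step s t S') x y :=
  Relation.TransGen.mono (fun _ _ => step_mono h) x y

/-- Removing an arc `a`: either the reachability survives, or it passes through `a`. -/
lemma reach_erase [DecidableEq E] {S : Finset E} (a : E) {u v : V}
    (h : Relation.TransGen (Step s t S) u v) :
    Relation.TransGen (Step s t (S.erase a)) u v ∨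
      (Relation.ReflTransGen (Step s t (S.erase a)) u (s a) ∧
       Relation.ReflTransGen (Step s t (S.erase a)) (t a) v) := by
  induction h with
  | single hstep =>
      obtain ⟨e, he, h1, h2⟩ := hstep
      by_cases hea : e = a
      · subst hea
        exact Or.inr ⟨by rw [h1], by rw [h2]⟩
      · exact Or.inl (Relation.TransGen.single ⟨e, Finset.mem_erase.mpr ⟨hea, he⟩, h1, h2⟩)
  | tail _ hstep ih =>
      obtain ⟨e, he, h1, h2⟩ := hstep
      by_cases hea : e = a
      · subst hea
        refine Or.inr ⟨?_, by rw [h2]⟩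
        rcases ih with h' | ⟨h1', _⟩
        · rw [h1]; exact h'.to_reflTransGen
        · exact h1'
      · rcases ih with h' | ⟨h1', h2'⟩
        · exact Or.inl (h'.tail ⟨e, Finset.mem_erase.mpr ⟨hea, he⟩, h1, h2⟩)
        · exact Or.inr ⟨h1', h2'.tail ⟨e, Finset.mem_erase.mpr ⟨hea, he⟩, h1, h2⟩⟩

/-- If no arc targets `z`, a reachability from `u ≠ z` avoids any arc with source `z`. -/
lemma reach_avoid [DecidableEq E] {S : Finset E} {z : V} (hz : ∀ e, t e ≠ z) (a : E)
    (ha : s a = z) {u v : V} (h : Relation.TransGen (Step s t S) u v) :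
    u ≠ z → Relation.TransGen (Step s t (S.erase a)) u v := by
  induction h using Relation.TransGen.head_induction_on with
  | single hstep =>
      intro hu
      obtain ⟨e, he, h1, h2⟩ := hstep
      refine Relation.TransGen.single ⟨e, Finset.mem_erase.mpr ⟨?_, he⟩, h1, h2⟩
      rintro rfl; exact hu (h1 ▸ ha ▸ rfl)
  | head h' hrest ihp =>
      intro hu
      obtain ⟨e, he, h1, h2⟩ := h'
      have hea : e ≠ a := by rintro rfl; exact hu (h1 ▸ ha ▸ rfl)
      have hc : _ ≠ z := h2 ▸ hz e
      exact (ihp hc).head ⟨e, Finset.mem_erase.mpr ⟨hea, he⟩, h1, h2⟩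

end SBB

-- continuation: assumes aux1 content above (will concatenate)
namespace SBB

variable {E : Type*} {n m : ℕ} (s t : E → Fin (n + 1)) (qt p : Fin m → Fin n)

/-- The root arc `(0, q̃ j)`. -/
def rootArc (j : Fin m) : ReducedArcs t qt p := Sum.inr (Sum.inl j)

/-- The arc `(p j, q̃ j)` (defaults to the root arc if `p j = q̃ j`). -/
noncomputable def pArc (j : Fin m) : ReducedArcs t qt p :=
  if h : p j ≠ qt j then Sum.inr (Sum.inr ⟨j, h⟩) else Sum.inr (Sum.inl j)

lemma pArc_eq {j : Fin m} (h : p j ≠ qt j) :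
    pArc t qt p j = Sum.inr (Sum.inr ⟨j, h⟩) := dif_pos h

variable {t qt p} in
lemma pArc_ne_rootArc {j : Fin m} (h : p j ≠ qt j) : pArc t qt p j ≠ rootArc t qt p j := by
  rw [pArc_eq t qt p h]; simp [rootArc]

@[simp] lemma src_rootArc (j : Fin m) : redSrc s t qt p (rootArc t qt p j) = 0 := rfl
@[simp] lemma tgt_rootArc (j : Fin m) : redTgt t qt p (rootArc t qt p j) = (qt j).succ := rfl

variable {p} in
lemma src_pArc {j : Fin m} (h : p j ≠ qt j) :
    redSrc s t qt p (pArc t qt p j) = (p j).succ := by rw [pArc_eq t qt p h]; rfl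

variable {p} in
lemma tgt_pArc {j : Fin m} (h : p j ≠ qt j) :
    redTgt t qt p (pArc t qt p j) = (qt j).succ := by rw [pArc_eq t qt p h]; rfl

lemma redTgt_ne_zero (ht : ∀ e, t e ≠ 0) (ee : ReducedArcs t qt p) :
    redTgt t qt p ee ≠ 0 := by
  rcases ee with ⟨e, he⟩ | k | ⟨k, hk⟩
  · exact ht e
  · exact Fin.succ_ne_zero _
  · exact Fin.succ_ne_zero _

variable {t qt p} in
lemma target_cases (hqt : Function.Injective qt) (ee : ReducedArcs t qt p) (j : Fin m)
    (h : redTgt t qt p ee = (qt j).succ) :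
    ee = rootArc t qt p j ∨ (p j ≠ qt j ∧ ee = pArc t qt p j) := by
  rcases ee with ⟨e, he⟩ | k | ⟨k, hk⟩
  · exact absurd h (he j)
  · have : k = j := hqt (Fin.succ_injective _ h)
    subst this; exact Or.inl rfl
  · have : k = j := hqt (Fin.succ_injective _ h)
    subst this
    exact Or.inr ⟨hk, (pArc_eq t qt p hk).symm⟩

/-- The "bad at `j`" predicate from the statement. -/
def BadAt (S : Finset (ReducedArcs t qt p)) (j : Fin m) : Prop :=
  qt j ≠ p j ∧ ∀ ℓ, ¬ ((qt j : Fin n) = p ℓ ∨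
    HasPathIn (redSrc s t qt p) (redTgt t qt p) S (qt j).succ (p ℓ).succ)

/-- The canonical (minimal) bad index of a branching. -/
noncomputable def theJ (hm : 0 < m) (S : Finset (ReducedArcs t qt p)) : Fin m :=
  if h : (Finset.univ.filter (BadAt s t qt p S)).Nonempty then
    (Finset.univ.filter (BadAt s t qt p S)).min' h else ⟨0, hm⟩

/-- The toggle: swap the in-arc of `q̃ j` between the root arc and the `p`-arc. -/
noncomputable def toggle (S : Finset (ReducedArcs t qt p)) (j : Fin m) :
    Finset (ReducedArcs t qt p) :=
  if rootArc t qt p j ∈ S then insert (pArc t qt p j) (S.erase (rootArc t qt p j))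
  else insert (rootArc t qt p j) (S.erase (pArc t qt p j))

variable {s t qt p}

lemma exactly_one (hqt : Function.Injective qt)
    {S : Finset (ReducedArcs t qt p)} {j : Fin m}
    (hArb : IsArbor n (redSrc s t qt p) (redTgt t qt p) S) (hne : p j ≠ qt j) :
    (rootArc t qt p j ∈ S ∧ pArc t qt p j ∉ S) ∨
    (pArc t qt p j ∈ S ∧ rootArc t qt p j ∉ S) := by
  obtain ⟨e₀, ⟨he₀S, he₀t⟩, huniq⟩ := hArb.2.1 (qt j).succ (Fin.succ_ne_zero _)
  rcases target_cases hqt e₀ j he₀t with rfl | ⟨_, rfl⟩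
  · refine Or.inl ⟨he₀S, fun hmem => ?_⟩
    exact pArc_ne_rootArc hne (huniq _ ⟨hmem, tgt_pArc t qt hne⟩)
  · refine Or.inr ⟨he₀S, fun hmem => ?_⟩
    exact pArc_ne_rootArc hne (huniq _ ⟨hmem, tgt_rootArc t qt p j⟩).symm

lemma erase_insert_erase_subset {α : Type*} [DecidableEq α] (x y : α) (S : Finset α) :
    (insert x (S.erase y)).erase x ⊆ S := by
  intro z hz
  rcases Finset.mem_erase.mp hz with ⟨hzx, hz'⟩
  rcases Finset.mem_insert.mp hz' with rfl | hz''
  · exact absurd rfl hzx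
  · exact Finset.mem_of_mem_erase hz''

lemma arbor_toggle (hqt : Function.Injective qt) (ht0 : ∀ e, t e ≠ 0)
    {S : Finset (ReducedArcs t qt p)} {j : Fin m}
    (hArb : IsArbor n (redSrc s t qt p) (redTgt t qt p) S)
    (hBad : BadAt s t qt p S j) :
    IsArbor n (redSrc s t qt p) (redTgt t qt p) (toggle t qt p S j) := by
  have hne : p j ≠ qt j := Ne.symm hBad.1
  have hnopath : ∀ ℓ, ¬ Relation.TransGen (Step (redSrc s t qt p) (redTgt t qt p) S)
      (qt j).succ (p ℓ).succ := by
    intro ℓ hreach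
    exact hBad.2 ℓ (Or.inr (hasPathIn_iff_transGen.mpr hreach))
  have hnocyc := hArb.2.2
  rw [hasCycleIn_iff_transGen] at hnocyc
  push_neg at hnocyc
  rcases exactly_one hqt hArb hne with ⟨hr, ha⟩ | ⟨ha, hr⟩
  · -- root arc in S: replace it by the p-arc
    rw [toggle, if_pos hr]
    have hanotin : pArc t qt p j ∉ S.erase (rootArc t qt p j) :=
      fun h => ha (Finset.mem_of_mem_erase h)
    refine ⟨?_, ?_, ?_⟩
    · rw [Finset.card_insert_of_notMem hanotin, Finset.card_erase_of_mem hr,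
        Nat.sub_add_cancel (Nat.one_le_iff_ne_zero.mpr
          (Finset.card_ne_zero_of_mem hr)), hArb.1]
    · intro i hi
      by_cases hij : i = (qt j).succ
      · subst hij
        refine ⟨pArc t qt p j, ⟨Finset.mem_insert_self _ _, tgt_pArc t qt hne⟩, ?_⟩
        rintro e ⟨heS, het⟩
        rcases target_cases hqt e j het with rfl | ⟨_, rfl⟩
        · exfalso
          rcases Finset.mem_insert.mp heS with h' | h'
          · exact pArc_ne_rootArc hne h'.symm
          · exact (Finset.mem_erase.mp h').1 rfl
        · rfl
      · obtain ⟨e₀, ⟨he₀S, he₀t⟩, huniq⟩ := hArb.2.1 i hi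
        have he₀r : e₀ ≠ rootArc t qt p j := fun h => hij (by rw [← he₀t, h]; rfl)
        refine ⟨e₀, ⟨Finset.mem_insert_of_mem (Finset.mem_erase.mpr ⟨he₀r, he₀S⟩), he₀t⟩, ?_⟩
        rintro e ⟨heS, het⟩
        have hea : e ≠ pArc t qt p j := fun h => hij (by rw [← het, h, tgt_pArc t qt hne])
        rcases Finset.mem_insert.mp heS with h' | h'
        · exact absurd h' hea
        · exact huniq e ⟨Finset.mem_of_mem_erase h', het⟩
    · rw [hasCycleIn_iff_transGen]
      rintro ⟨u, hcyc⟩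
      have hsub : (insert (pArc t qt p j) (S.erase (rootArc t qt p j))).erase (pArc t qt p j)
          ⊆ S := erase_insert_erase_subset _ _ _
      rcases reach_erase (pArc t qt p j) hcyc with h' | ⟨h1, h2⟩
      · exact hnocyc u (reach_mono hsub h')
      · have h3 := (h2.trans h1)
        rw [src_pArc s t qt hne, tgt_pArc t qt hne] at h3
        rcases Relation.reflTransGen_iff_eq_or_transGen.mp h3 with h4 | h4
        · exact hne (Fin.succ_injective _ h4.symm).symm
        · exact hnopath j (reach_mono hsub h4)
  · -- p-arc in S: replace it by the root arc
    rw [toggle, if_neg hr]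
    have hrnotin : rootArc t qt p j ∉ S.erase (pArc t qt p j) :=
      fun h => hr (Finset.mem_of_mem_erase h)
    refine ⟨?_, ?_, ?_⟩
    · rw [Finset.card_insert_of_notMem hrnotin, Finset.card_erase_of_mem ha,
        Nat.sub_add_cancel (Nat.one_le_iff_ne_zero.mpr
          (Finset.card_ne_zero_of_mem ha)), hArb.1]
    · intro i hi
      by_cases hij : i = (qt j).succ
      · subst hij
        refine ⟨rootArc t qt p j, ⟨Finset.mem_insert_self _ _, tgt_rootArc t qt p j⟩, ?_⟩
        rintro e ⟨heS, het⟩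
        rcases target_cases hqt e j het with rfl | ⟨_, rfl⟩
        · rfl
        · exfalso
          rcases Finset.mem_insert.mp heS with h' | h'
          · exact pArc_ne_rootArc hne h'
          · exact (Finset.mem_erase.mp h').1 rfl
      · obtain ⟨e₀, ⟨he₀S, he₀t⟩, huniq⟩ := hArb.2.1 i hi
        have he₀a : e₀ ≠ pArc t qt p j :=
          fun h => hij (by rw [← he₀t, h, tgt_pArc t qt hne])
        refine ⟨e₀, ⟨Finset.mem_insert_of_mem (Finset.mem_erase.mpr ⟨he₀a, he₀S⟩), he₀t⟩, ?_⟩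
        rintro e ⟨heS, het⟩
        have her : e ≠ rootArc t qt p j := fun h => hij (by rw [← het, h]; rfl)
        rcases Finset.mem_insert.mp heS with h' | h'
        · exact absurd h' her
        · exact huniq e ⟨Finset.mem_of_mem_erase h', het⟩
    · rw [hasCycleIn_iff_transGen]
      rintro ⟨u, hcyc⟩
      have hu0 : u ≠ 0 := by
        cases hcyc with
        | single h => obtain ⟨e, _, _, h2⟩ := h; exact h2 ▸ redTgt_ne_zero t qt p ht0 e
        | tail _ h => obtain ⟨e, _, _, h2⟩ := h; exact h2 ▸ redTgt_ne_zero t qt p ht0 e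
      have h' := reach_avoid (redTgt_ne_zero t qt p ht0) (rootArc t qt p j)
        (src_rootArc s t qt p j) hcyc hu0
      have hsub : (insert (rootArc t qt p j) (S.erase (pArc t qt p j))).erase (rootArc t qt p j)
          ⊆ S := erase_insert_erase_subset _ _ _
      exact hnocyc u (reach_mono hsub h')

lemma badAt_toggle (hqt : Function.Injective qt) (ht0 : ∀ e, t e ≠ 0)
    {S : Finset (ReducedArcs t qt p)} {j : Fin m}
    (hArb : IsArbor n (redSrc s t qt p) (redTgt t qt p) S)
    (hBad : BadAt s t qt p S j) :
    ∀ j', BadAt s t qt p S j' ↔ BadAt s t qt p (toggle t qt p S j) j' := by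
  have hne : p j ≠ qt j := Ne.symm hBad.1
  rcases exactly_one hqt hArb hne with ⟨hr, ha⟩ | ⟨ha, hr⟩
  · -- Case A : r ∈ S, toggle = insert a (S.erase r)
    rw [toggle, if_pos hr]
    set S' := insert (pArc t qt p j) (S.erase (rootArc t qt p j)) with hS'
    have hsub1 : S'.erase (pArc t qt p j) ⊆ S := erase_insert_erase_subset _ _ _
    have hsub2 : S.erase (rootArc t qt p j) ⊆ S' := Finset.subset_insert _ _
    intro j'
    constructor
    · rintro ⟨hne', hnp'⟩
      refine ⟨hne', fun ℓ h => ?_⟩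
      rcases h with heq | hpath
      · exact hnp' ℓ (Or.inl heq)
      · have hreach := hasPathIn_iff_transGen.mp hpath
        rcases reach_erase (pArc t qt p j) hreach with h' | ⟨_, h2⟩
        · exact hnp' ℓ (Or.inr (hasPathIn_iff_transGen.mpr (reach_mono hsub1 h')))
        · rw [tgt_pArc t qt hne] at h2
          rcases Relation.reflTransGen_iff_eq_or_transGen.mp h2 with h4 | h4
          · exact hBad.2 ℓ (Or.inl (Fin.succ_injective _ h4.symm))
          · exact hBad.2 ℓ (Or.inr (hasPathIn_iff_transGen.mpr (reach_mono hsub1 h4)))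
    · rintro ⟨hne', hnp'⟩
      refine ⟨hne', fun ℓ h => ?_⟩
      rcases h with heq | hpath
      · exact hnp' ℓ (Or.inl heq)
      · have hreach := hasPathIn_iff_transGen.mp hpath
        have h' := reach_avoid (redTgt_ne_zero t qt p ht0) (rootArc t qt p j)
          (src_rootArc s t qt p j) hreach (Fin.succ_ne_zero _)
        exact hnp' ℓ (Or.inr (hasPathIn_iff_transGen.mpr (reach_mono hsub2 h')))
  · -- Case B : a ∈ S, toggle = insert r (S.erase a)
    rw [toggle, if_neg hr]
    set S' := insert (rootArc t qt p j) (S.erase (pArc t qt p j)) with hS'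
    have hsub1 : S'.erase (rootArc t qt p j) ⊆ S := erase_insert_erase_subset _ _ _
    have hsub2 : S.erase (pArc t qt p j) ⊆ S' := Finset.subset_insert _ _
    have dir1 : ∀ j', BadAt s t qt p S j' → BadAt s t qt p S' j' := by
      rintro j' ⟨hne', hnp'⟩
      refine ⟨hne', fun ℓ h => ?_⟩
      rcases h with heq | hpath
      · exact hnp' ℓ (Or.inl heq)
      · have hreach := hasPathIn_iff_transGen.mp hpath
        have h' := reach_avoid (redTgt_ne_zero t qt p ht0) (rootArc t qt p j)
          (src_rootArc s t qt p j) hreach (Fin.succ_ne_zero _)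
        exact hnp' ℓ (Or.inr (hasPathIn_iff_transGen.mpr (reach_mono hsub1 h')))
    have hBad' : BadAt s t qt p S' j := dir1 j hBad
    intro j'
    constructor
    · exact dir1 j'
    · rintro ⟨hne', hnp'⟩
      refine ⟨hne', fun ℓ h => ?_⟩
      rcases h with heq | hpath
      · exact hnp' ℓ (Or.inl heq)
      · have hreach := hasPathIn_iff_transGen.mp hpath
        rcases reach_erase (pArc t qt p j) hreach with h' | ⟨_, h2⟩
        · exact hnp' ℓ (Or.inr (hasPathIn_iff_transGen.mpr (reach_mono hsub2 h')))
        · rw [tgt_pArc t qt hne] at h2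
          rcases Relation.reflTransGen_iff_eq_or_transGen.mp h2 with h4 | h4
          · exact hBad'.2 ℓ (Or.inl (Fin.succ_injective _ h4.symm))
          · exact hBad'.2 ℓ (Or.inr (hasPathIn_iff_transGen.mpr (reach_mono hsub2 h4)))

lemma theJ_toggle (hm0 : 0 < m) (hqt : Function.Injective qt) (ht0 : ∀ e, t e ≠ 0)
    {S : Finset (ReducedArcs t qt p)} {j : Fin m}
    (hArb : IsArbor n (redSrc s t qt p) (redTgt t qt p) S)
    (hBad : BadAt s t qt p S j) :
    theJ s t qt p hm0 (toggle t qt p S j) = theJ s t qt p hm0 S := by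
  have hset : Finset.univ.filter (BadAt s t qt p (toggle t qt p S j)) =
      Finset.univ.filter (BadAt s t qt p S) := by
    ext k
    simp only [Finset.mem_filter, Finset.mem_univ, true_and]
    exact (badAt_toggle hqt ht0 hArb hBad k).symm
  rw [theJ, theJ, hset]

lemma toggle_toggle (hqt : Function.Injective qt)
    {S : Finset (ReducedArcs t qt p)} {j : Fin m}
    (hArb : IsArbor n (redSrc s t qt p) (redTgt t qt p) S) (hne : p j ≠ qt j) :
    toggle t qt p (toggle t qt p S j) j = S := by
  rcases exactly_one hqt hArb hne with ⟨hr, ha⟩ | ⟨ha, hr⟩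
  · have htog : toggle t qt p S j = insert (pArc t qt p j) (S.erase (rootArc t qt p j)) := by
      rw [toggle, if_pos hr]
    have hrnotin : rootArc t qt p j ∉ insert (pArc t qt p j) (S.erase (rootArc t qt p j)) := by
      intro h
      rcases Finset.mem_insert.mp h with h' | h'
      · exact pArc_ne_rootArc hne h'.symm
      · exact (Finset.mem_erase.mp h').1 rfl
    rw [htog, toggle, if_neg hrnotin,
      Finset.erase_insert (fun h => ha (Finset.mem_of_mem_erase h)),
      Finset.insert_erase hr]
  · have htog : toggle t qt p S j = insert (rootArc t qt p j) (S.erase (pArc t qt p j)) := by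
      rw [toggle, if_neg hr]
    rw [htog, toggle, if_pos (Finset.mem_insert_self _ _),
      Finset.erase_insert (fun h => hr (Finset.mem_of_mem_erase h)),
      Finset.insert_erase ha]

lemma toggle_ne (hqt : Function.Injective qt)
    {S : Finset (ReducedArcs t qt p)} {j : Fin m}
    (hArb : IsArbor n (redSrc s t qt p) (redTgt t qt p) S) (hne : p j ≠ qt j) :
    toggle t qt p S j ≠ S := by
  rcases exactly_one hqt hArb hne with ⟨hr, ha⟩ | ⟨ha, hr⟩
  · rw [toggle, if_pos hr]
    intro h
    rw [← h] at hr
    rcases Finset.mem_insert.mp hr with h' | h'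
    · exact pArc_ne_rootArc hne h'.symm
    · exact (Finset.mem_erase.mp h').1 rfl
  · rw [toggle, if_neg hr]
    intro h
    rw [← h] at hr
    exact hr (Finset.mem_insert_self _ _)

lemma prod_toggle {R : Type*} [CommRing R] (w : E → R) (hqt : Function.Injective qt)
    {S : Finset (ReducedArcs t qt p)} {j : Fin m}
    (hArb : IsArbor n (redSrc s t qt p) (redTgt t qt p) S) (hne : p j ≠ qt j) :
    ∏ e ∈ toggle t qt p S j, redWt t w qt p e = - ∏ e ∈ S, redWt t w qt p e := by
  have hwr : redWt t w qt p (rootArc t qt p j) = 1 := rfl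
  have hwa : redWt t w qt p (pArc t qt p j) = -1 := by rw [pArc_eq t qt p hne]; rfl
  rcases exactly_one hqt hArb hne with ⟨hr, ha⟩ | ⟨ha, hr⟩
  · rw [toggle, if_pos hr,
      Finset.prod_insert (fun h => ha (Finset.mem_of_mem_erase h)), hwa,
      ← Finset.mul_prod_erase _ _ hr, hwr]
    ring
  · rw [toggle, if_neg hr,
      Finset.prod_insert (fun h => hr (Finset.mem_of_mem_erase h)), hwr,
      ← Finset.mul_prod_erase _ _ ha, hwa]
    ring

lemma badAt_theJ (hm0 : 0 < m) {S : Finset (ReducedArcs t qt p)}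
    (h : ∃ j, BadAt s t qt p S j) : BadAt s t qt p S (theJ s t qt p hm0 S) := by
  obtain ⟨j, hj⟩ := h
  have hne : (Finset.univ.filter (BadAt s t qt p S)).Nonempty :=
    ⟨j, Finset.mem_filter.mpr ⟨Finset.mem_univ _, hj⟩⟩
  rw [theJ, dif_pos hne]
  have := Finset.min'_mem _ hne
  exact (Finset.mem_filter.mp this).2

end SBB

/-- In the sum of signed weights over all spanning branchings of the matrix
digraph of the reduced matrix `A^{P,Q̃}`, the contributions of those branchings containing a
rooted vertex `q̃ j` with `q̃ j ≠ p j` and no directed path from `q̃ j` to any vertex `p ℓ`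
cancel in pairs (replacing the weight-`1` root arc to `q̃ j` by the weight-`(-1)` arc
`(p j, q̃ j)` flips the sign of the weight), so their total contribution is `0`. -/
theorem sum_bad_branchings_eq_zero
    (n m : ℕ) (hn : 1 ≤ n) (hm : 1 ≤ m)
    (R : Type*) [CommRing R]
    (E : Type*) [Fintype E] [DecidableEq E]
    (s t : E → Fin (n + 1)) (w : E → R)
    (ht : ∀ e, t e ≠ 0) (hs : ∀ e, s e ≠ t e)
    (qt p : Fin m → Fin n)
    (hqt : Function.Injective qt) (hp : Function.Injective p) :
    ∑ S ∈ Finset.univ.filter (fun S : Finset (ReducedArcs t qt p) =>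
        IsArbor n (redSrc s t qt p) (redTgt t qt p) S ∧
        ∃ j, qt j ≠ p j ∧
          ∀ ℓ, ¬ ((qt j : Fin n) = p ℓ ∨
            HasPathIn (redSrc s t qt p) (redTgt t qt p) S (qt j).succ (p ℓ).succ)),
      ∏ e ∈ S, redWt t w qt p e = 0 := by
  have hm0 : 0 < m := hm
  refine Finset.sum_involution
    (fun S _ => SBB.toggle t qt p S (SBB.theJ s t qt p hm0 S)) ?_ ?_ ?_ ?_
  · intro S hSmem
    obtain ⟨hArb, hex⟩ := (Finset.mem_filter.mp hSmem).2
    have hex' : ∃ j, SBB.BadAt s t qt p S j := hex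
    have hbad := SBB.badAt_theJ hm0 hex'
    rw [SBB.prod_toggle w hqt hArb (Ne.symm hbad.1)]
    ring
  · intro S hSmem _
    obtain ⟨hArb, hex⟩ := (Finset.mem_filter.mp hSmem).2
    have hex' : ∃ j, SBB.BadAt s t qt p S j := hex
    exact SBB.toggle_ne hqt hArb (Ne.symm (SBB.badAt_theJ hm0 hex').1)
  · intro S hSmem
    obtain ⟨hArb, hex⟩ := (Finset.mem_filter.mp hSmem).2
    have hex' : ∃ j, SBB.BadAt s t qt p S j := hex
    have hbad := SBB.badAt_theJ hm0 hex'
    refine Finset.mem_filter.mpr ⟨Finset.mem_univ _, SBB.arbor_toggle hqt ht hArb hbad, ?_⟩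
    exact ⟨_, (SBB.badAt_toggle hqt ht hArb hbad _).mp hbad⟩
  · intro S hSmem
    obtain ⟨hArb, hex⟩ := (Finset.mem_filter.mp hSmem).2
    have hex' : ∃ j, SBB.BadAt s t qt p S j := hex
    have hbad := SBB.badAt_theJ hm0 hex'
    show SBB.toggle t qt p (SBB.toggle t qt p S (SBB.theJ s t qt p hm0 S))
        (SBB.theJ s t qt p hm0 (SBB.toggle t qt p S (SBB.theJ s t qt p hm0 S))) = S
    rw [SBB.theJ_toggle hm0 hqt ht hArb hbad]
    exact SBB.toggle_toggle hqt hArb (Ne.symm hbad.1)
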